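/- Let X₁, …, X_d be zero-mean Laplace random variables (not necessarily independent) with diversity parameters b₁, …, b_d, and let b⋆ = max_k b_k. Then E[max_k X_k²] ≤ ((ln d)²/2 + ln d + 1) · max_k E[X_k²], where E[X_k²] = 2 b_k². -/

import Mathlib

open MeasureTheory Set Filter
open scoped ENNReal NNReal

private lemma tendsto_exp_div_aux {B : ℝ} (hB : 0 < B) :
    Tendsto (fun x : ℝ => Real.exp (-(x / B))) atTop (nhds 0) :=
  Real.tendsto_exp_atBot.comp
    ((tendsto_neg_atTop_atBot).comp (tendsto_id.atTop_div_const hB))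

private lemma exp_hasDeriv {B : ℝ} (hB : 0 < B) (x : ℝ) :
    HasDerivAt (fun y : ℝ => -B * Real.exp (-(y / B))) (Real.exp (-(x / B))) x := by
  have h : HasDerivAt (fun y : ℝ => Real.exp (-(y / B)))
      (Real.exp (-(x / B)) * -(1 / B)) x :=
    (((hasDerivAt_id x).div_const B).neg).exp
  have h2 := h.const_mul (-B)
  refine h2.congr_deriv ?_
  field_simp

private lemma tendsto_negB {B : ℝ} (hB : 0 < B) :
    Tendsto (fun x : ℝ => -B * Real.exp (-(x / B))) atTop (nhds 0) := by
  have := (tendsto_exp_div_aux hB).const_mul (-B)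
  simpa using this

private lemma integrableOn_exp_div_Ioi {B : ℝ} (hB : 0 < B) (a : ℝ) :
    IntegrableOn (fun x => Real.exp (-(x / B))) (Set.Ioi a) :=
  integrableOn_Ioi_deriv_of_nonneg' (a := a) (fun x _ => exp_hasDeriv hB x)
    (fun x _ => (Real.exp_pos _).le) (tendsto_negB hB)

private lemma integral_exp_div_Ioi {B : ℝ} (hB : 0 < B) (a : ℝ) :
    ∫ x in Set.Ioi a, Real.exp (-(x / B)) = B * Real.exp (-(a / B)) := by
  have h := integral_Ioi_of_hasDerivAt_of_nonneg' (a := a) (fun x _ => exp_hasDeriv hB x)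
    (fun x _ => (Real.exp_pos _).le) (tendsto_negB hB)
  rw [h]; ring

private lemma xexp_hasDeriv {B : ℝ} (hB : 0 < B) (x : ℝ) :
    HasDerivAt (fun y : ℝ => -(B * y + B ^ 2) * Real.exp (-(y / B)))
      (x * Real.exp (-(x / B))) x := by
  have h1 : HasDerivAt (fun y : ℝ => -(B * y + B ^ 2)) (-B) x := by
    have := (((hasDerivAt_id x).const_mul B).add_const (B ^ 2)).neg; simp only [mul_one] at this; exact this
  have h2 : HasDerivAt (fun y : ℝ => Real.exp (-(y / B)))
      (Real.exp (-(x / B)) * -(1 / B)) x :=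
    (((hasDerivAt_id x).div_const B).neg).exp
  have h3 := h1.mul h2
  refine h3.congr_deriv ?_
  field_simp
  ring

private lemma tendsto_xexp {B : ℝ} (hB : 0 < B) :
    Tendsto (fun x : ℝ => -(B * x + B ^ 2) * Real.exp (-(x / B))) atTop (nhds 0) := by
  have ha : Tendsto (fun y : ℝ => y * Real.exp (-y)) atTop (nhds 0) := by
    simpa using Real.tendsto_pow_mul_exp_neg_atTop_nhds_zero 1
  have hb : Tendsto (fun y : ℝ => Real.exp (-y)) atTop (nhds 0) :=
    Real.tendsto_exp_neg_atTop_nhds_zero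
  have h1 : Tendsto (fun y : ℝ => -(B ^ 2) * ((y + 1) * Real.exp (-y))) atTop (nhds 0) := by
    have := (ha.add hb).const_mul (-(B ^ 2))
    simpa [add_mul] using this
  have h2 : Tendsto (fun x : ℝ => x / B) atTop atTop := tendsto_id.atTop_div_const hB
  refine Tendsto.congr (fun x => ?_) (h1.comp h2)
  simp only [Function.comp]
  field_simp

private lemma integrableOn_xexp_Ioi {B : ℝ} (hB : 0 < B) {a : ℝ} (ha : 0 ≤ a) :
    IntegrableOn (fun x => x * Real.exp (-(x / B))) (Set.Ioi a) :=
  integrableOn_Ioi_deriv_of_nonneg' (a := a) (fun x _ => xexp_hasDeriv hB x)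
    (fun x hx => mul_nonneg (le_of_lt (lt_of_le_of_lt ha hx)) (Real.exp_pos _).le)
    (tendsto_xexp hB)

private lemma integral_xexp_Ioi {B : ℝ} (hB : 0 < B) {a : ℝ} (ha : 0 ≤ a) :
    ∫ x in Set.Ioi a, x * Real.exp (-(x / B)) = (B * a + B ^ 2) * Real.exp (-(a / B)) := by
  have h := integral_Ioi_of_hasDerivAt_of_nonneg' (a := a) (fun x _ => xexp_hasDeriv hB x)
    (fun x hx => mul_nonneg (le_of_lt (lt_of_le_of_lt ha hx)) (Real.exp_pos _).le)
    (tendsto_xexp hB)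
  rw [h]; ring

private lemma lintegral_density_Ioi {bk : ℝ} (hbk : 0 < bk) (t : ℝ) :
    ∫⁻ x in Set.Ioi t, ENNReal.ofReal ((2 * bk)⁻¹ * Real.exp (-(x / bk)))
      = ENNReal.ofReal (2⁻¹ * Real.exp (-(t / bk))) := by
  rw [← ofReal_integral_eq_lintegral_ofReal
      ((integrableOn_exp_div_Ioi hbk t).const_mul _)
      (Filter.Eventually.of_forall fun x => by positivity)]
  rw [MeasureTheory.integral_const_mul, integral_exp_div_Ioi hbk t]
  congr 1
  field_simp

private lemma laplace_tail {bk : ℝ} (hbk : 0 < bk) {t : ℝ} (ht : 0 ≤ t) :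
    (volume.withDensity fun x => ENNReal.ofReal ((2 * bk)⁻¹ * Real.exp (-|x| / bk)))
      {x : ℝ | t < |x|} ≤ ENNReal.ofReal (Real.exp (-(t / bk))) := by
  set ν := volume.withDensity fun x => ENNReal.ofReal ((2 * bk)⁻¹ * Real.exp (-|x| / bk))
  have hsub : {x : ℝ | t < |x|} ⊆ Set.Iic (-t) ∪ Set.Ioi t := by
    intro x hx
    by_cases hx0 : 0 ≤ x
    · right; simpa [abs_of_nonneg hx0] using hx
    · left
      push_neg at hx0
      have hx1 : t < |x| := hx
      rw [abs_of_neg hx0] at hx1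
      simp only [Set.mem_Iic]; linarith
  have h2 : ν (Set.Ioi t) = ENNReal.ofReal (2⁻¹ * Real.exp (-(t / bk))) := by
    rw [show ν (Set.Ioi t) = ∫⁻ x in Set.Ioi t,
        ENNReal.ofReal ((2 * bk)⁻¹ * Real.exp (-|x| / bk)) from
      withDensity_apply _ measurableSet_Ioi]
    rw [setLIntegral_congr_fun measurableSet_Ioi
      (fun x (hx : t < x) => by
        rw [abs_of_pos (lt_of_le_of_lt ht hx), neg_div])]
    exact lintegral_density_Ioi hbk t
  have h1 : ν (Set.Iic (-t)) = ENNReal.ofReal (2⁻¹ * Real.exp (-(t / bk))) := by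
    have hg : Measurable fun x : ℝ => ENNReal.ofReal ((2 * bk)⁻¹ * Real.exp (x / bk)) := by
      measurability
    have e1 : ν (Set.Iic (-t)) = ∫⁻ x in Set.Iic (-t),
        ENNReal.ofReal ((2 * bk)⁻¹ * Real.exp (x / bk)) := by
      rw [show ν (Set.Iic (-t)) = ∫⁻ x in Set.Iic (-t),
          ENNReal.ofReal ((2 * bk)⁻¹ * Real.exp (-|x| / bk)) from
        withDensity_apply _ measurableSet_Iic]
      refine setLIntegral_congr_fun measurableSet_Iic
        (fun x (hx : x ≤ -t) => ?_)
      rw [abs_of_nonpos (by linarith : x ≤ 0), neg_neg]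
    have hmap : volume.restrict (Set.Iic (-t))
        = Measure.map Neg.neg (volume.restrict (Set.Ici t)) := by
      have hpre : (Neg.neg : ℝ → ℝ) ⁻¹' Set.Iic (-t) = Set.Ici t := by
        ext x; simp
      calc volume.restrict (Set.Iic (-t))
          = (Measure.map Neg.neg (volume : Measure ℝ)).restrict (Set.Iic (-t)) := by
            rw [Measure.map_neg_eq_self (volume : Measure ℝ)]
        _ = Measure.map Neg.neg (volume.restrict ((Neg.neg : ℝ → ℝ) ⁻¹' Set.Iic (-t))) :=
            Measure.restrict_map measurable_neg measurableSet_Iic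
        _ = Measure.map Neg.neg (volume.restrict (Set.Ici t)) := by rw [hpre]
    rw [e1, hmap, lintegral_map hg measurable_neg]
    rw [setLIntegral_congr (Ioi_ae_eq_Ici (a := t)).symm]
    simp only [neg_div]
    exact lintegral_density_Ioi hbk t
  calc ν {x : ℝ | t < |x|} ≤ ν (Set.Iic (-t) ∪ Set.Ioi t) := measure_mono hsub
    _ ≤ ν (Set.Iic (-t)) + ν (Set.Ioi t) := measure_union_le _ _
    _ = ENNReal.ofReal (2⁻¹ * Real.exp (-(t / bk)))
        + ENNReal.ofReal (2⁻¹ * Real.exp (-(t / bk))) := by rw [h1, h2]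
    _ = ENNReal.ofReal (Real.exp (-(t / bk))) := by
        rw [← ENNReal.ofReal_add (by positivity) (by positivity)]
        congr 1; ring

/-- Maximum inequality for (not necessarily independent) zero-mean Laplacians:
if `X_k ~ Laplace(0, b_k)` then
`E[max_k X_k²] ≤ ((ln d)²/2 + ln d + 1) · max_k E[X_k²]` with `E[X_k²] = 2 b_k²`. -/
theorem laplace_max_sq_le
    {Ω : Type*} [MeasurableSpace Ω] (μ : Measure Ω) [IsProbabilityMeasure μ]
    (d : ℕ) (hd : 0 < d) (X : Fin d → Ω → ℝ) (b : Fin d → ℝ)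
    (hb : ∀ k, 0 < b k) (hX : ∀ k, Measurable (X k))
    (hlaplace : ∀ k, Measure.map (X k) μ =
      volume.withDensity (fun x => ENNReal.ofReal ((2 * b k)⁻¹ * Real.exp (-|x| / b k)))) :
    ∫ ω, (⨆ k, (X k ω) ^ 2) ∂μ
      ≤ ((Real.log d) ^ 2 / 2 + Real.log d + 1) * ⨆ k, 2 * (b k) ^ 2 := by
  haveI : Nonempty (Fin d) := ⟨⟨0, hd⟩⟩
  set B : ℝ := ⨆ k, b k with hBdef
  have hbdd : BddAbove (Set.range b) := Set.Finite.bddAbove (Set.finite_range b)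
  have hkB : ∀ k, b k ≤ B := fun k => le_ciSup hbdd k
  have hB : 0 < B := lt_of_lt_of_le (hb ⟨0, hd⟩) (hkB _)
  have hd1 : (1 : ℝ) ≤ d := by exact_mod_cast hd
  have hlog : 0 ≤ Real.log d := Real.log_nonneg hd1
  -- sup of the variances
  have hsup2 : (⨆ k, 2 * (b k) ^ 2) = 2 * B ^ 2 := by
    obtain ⟨k0, hk0⟩ := Finite.exists_max b
    have hBk0 : B = b k0 := le_antisymm (ciSup_le hk0) (hkB k0)
    apply le_antisymm
    · refine ciSup_le fun k => ?_
      have h1 : b k ≤ B := hkB k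
      nlinarith [(hb k).le]
    · rw [hBk0]
      exact le_ciSup (f := fun k => 2 * (b k) ^ 2)
        (Set.Finite.bddAbove (Set.finite_range _)) k0
  set f : Ω → ℝ := fun ω => ⨆ k, |X k ω| with hfdef
  have hf_meas : Measurable f := Measurable.iSup fun k => (hX k).abs
  have hf_nn : ∀ ω, 0 ≤ f ω := fun ω =>
    le_trans (abs_nonneg (X ⟨0, hd⟩ ω))
      (le_ciSup (f := fun k => |X k ω|) (Set.Finite.bddAbove (Set.finite_range _)) ⟨0, hd⟩)
  have hf_sq : ∀ ω, (⨆ k, (X k ω) ^ 2) = f ω ^ 2 := by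
    intro ω
    obtain ⟨k0, hk0⟩ := Finite.exists_max fun k => |X k ω|
    have hfω : f ω = |X k0 ω| :=
      le_antisymm (ciSup_le hk0)
        (le_ciSup (f := fun k => |X k ω|) (Set.Finite.bddAbove (Set.finite_range _)) k0)
    apply le_antisymm
    · refine ciSup_le fun k => ?_
      rw [hfω, ← sq_abs (X k ω)]
      exact pow_le_pow_left₀ (abs_nonneg _) (hk0 k) 2
    · rw [hfω, sq_abs]
      exact le_ciSup (f := fun k => (X k ω) ^ 2)
        (Set.Finite.bddAbove (Set.finite_range _)) k0
  -- tail bound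
  have htail : ∀ t : ℝ, 0 ≤ t → μ {ω | t < f ω} ≤
      (d : ℝ≥0∞) * ENNReal.ofReal (Real.exp (-(t / B))) := by
    intro t ht
    have hsub : {ω | t < f ω} ⊆ ⋃ k, {ω | t < |X k ω|} := by
      intro ω hω
      by_contra h
      simp only [Set.mem_iUnion, Set.mem_setOf_eq, not_exists, not_lt] at h
      exact absurd hω (not_lt.2 (ciSup_le h))
    have hk : ∀ k, μ {ω | t < |X k ω|} ≤ ENNReal.ofReal (Real.exp (-(t / B))) := by
      intro k
      have hma : MeasurableSet {x : ℝ | t < |x|} :=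
        measurableSet_lt measurable_const measurable_id.abs
      calc μ {ω | t < |X k ω|} = (Measure.map (X k) μ) {x : ℝ | t < |x|} := by
            rw [Measure.map_apply (hX k) hma]; rfl
        _ ≤ ENNReal.ofReal (Real.exp (-(t / b k))) := by
            rw [hlaplace k]; exact laplace_tail (hb k) ht
        _ ≤ ENNReal.ofReal (Real.exp (-(t / B))) := by
            apply ENNReal.ofReal_le_ofReal
            apply Real.exp_le_exp.2
            have h1 : t / B ≤ t / b k := div_le_div_of_nonneg_left ht (hb k) (hkB k)
            linarith
    refine le_trans (measure_mono hsub) (le_trans (measure_iUnion_le _) ?_)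
    rw [tsum_fintype]
    calc ∑ k, μ {ω | t < |X k ω|}
        ≤ ∑ _k : Fin d, ENNReal.ofReal (Real.exp (-(t / B))) :=
          Finset.sum_le_sum fun k _ => hk k
      _ = (d : ℝ≥0∞) * ENNReal.ofReal (Real.exp (-(t / B))) := by
          simp [Finset.sum_const, Finset.card_univ, nsmul_eq_mul]
  -- rewrite integrand
  have hstep : ∫ ω, (⨆ k, (X k ω) ^ 2) ∂μ = ∫ ω, f ω ^ 2 ∂μ :=
    integral_congr_ae (Filter.Eventually.of_forall hf_sq)
  rw [hstep, hsup2]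
  have hRHSnn : 0 ≤ ((Real.log d) ^ 2 / 2 + Real.log d + 1) * (2 * B ^ 2) := by positivity
  rw [integral_eq_lintegral_of_nonneg_ae (Filter.Eventually.of_forall fun ω => sq_nonneg _)
    ((hf_meas.pow_const 2).aestronglyMeasurable)]
  refine ENNReal.toReal_le_of_le_ofReal hRHSnn ?_
  -- layer cake
  have hpow : ∀ x : ℝ, x ^ (2 : ℝ) = x ^ 2 := fun x => by
    rw [show (2 : ℝ) = ((2 : ℕ) : ℝ) by norm_num, Real.rpow_natCast]
  have hlc : ∫⁻ ω, ENNReal.ofReal (f ω ^ 2) ∂μ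
      = ENNReal.ofReal 2 * ∫⁻ t in Set.Ioi 0, μ {a | t < f a} * ENNReal.ofReal t := by
    have h := lintegral_rpow_eq_lintegral_meas_lt_mul μ
      (Filter.Eventually.of_forall hf_nn) hf_meas.aemeasurable (p := 2) two_pos
    simp only [hpow, show (2 : ℝ) - 1 = 1 by norm_num, Real.rpow_one] at h
    exact h
  rw [hlc]
  set t0 : ℝ := B * Real.log d with ht0def
  have ht0 : 0 ≤ t0 := mul_nonneg hB.le hlog
  have hsplit : Set.Ioi (0 : ℝ) = Set.Ioc 0 t0 ∪ Set.Ioi t0 :=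
    (Set.Ioc_union_Ioi_eq_Ioi ht0).symm
  have hIoc : ∫⁻ t in Set.Ioc 0 t0, μ {a | t < f a} * ENNReal.ofReal t
      ≤ ENNReal.ofReal (t0 ^ 2 / 2) := by
    calc ∫⁻ t in Set.Ioc 0 t0, μ {a | t < f a} * ENNReal.ofReal t
        ≤ ∫⁻ t in Set.Ioc 0 t0, ENNReal.ofReal t :=
          lintegral_mono fun t => by
            simpa using mul_le_mul_left (prob_le_one (μ := μ)) (ENNReal.ofReal t)
      _ = ENNReal.ofReal (∫ t in Set.Ioc 0 t0, t) :=
          (ofReal_integral_eq_lintegral_ofReal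
            ((intervalIntegrable_iff_integrableOn_Ioc_of_le ht0).1 intervalIntegral.intervalIntegrable_id)
            ((ae_restrict_iff' measurableSet_Ioc).2
              (Filter.Eventually.of_forall fun t ht => ht.1.le))).symm
      _ = ENNReal.ofReal (t0 ^ 2 / 2) := by
          rw [← intervalIntegral.integral_of_le ht0, integral_id]
          norm_num
  have hIoi : ∫⁻ t in Set.Ioi t0, μ {a | t < f a} * ENNReal.ofReal t
      ≤ ENNReal.ofReal (B ^ 2 * (Real.log d + 1)) := by
    have hmeas_g : Measurable fun t : ℝ =>
        (d : ℝ≥0∞) * ENNReal.ofReal (Real.exp (-(t / B))) * ENNReal.ofReal t :=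
      (((Real.measurable_exp.comp (measurable_id.div_const B).neg).ennreal_ofReal.const_mul
        _).mul measurable_id.ennreal_ofReal)
    calc ∫⁻ t in Set.Ioi t0, μ {a | t < f a} * ENNReal.ofReal t
        ≤ ∫⁻ t in Set.Ioi t0,
            (d : ℝ≥0∞) * ENNReal.ofReal (Real.exp (-(t / B))) * ENNReal.ofReal t :=
          setLIntegral_mono hmeas_g fun t (ht : t0 < t) =>
            mul_le_mul_left (htail t (le_trans ht0 ht.le)) _
      _ = (d : ℝ≥0∞) * ∫⁻ t in Set.Ioi t0, ENNReal.ofReal (t * Real.exp (-(t / B))) := by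
          rw [← lintegral_const_mul' _ _ (by simp : (d : ℝ≥0∞) ≠ ⊤)]
          refine lintegral_congr fun t => ?_
          rw [mul_assoc, ← ENNReal.ofReal_mul (Real.exp_pos _).le, mul_comm (Real.exp _) t]
      _ = (d : ℝ≥0∞) * ENNReal.ofReal (∫ t in Set.Ioi t0, t * Real.exp (-(t / B))) := by
          rw [ofReal_integral_eq_lintegral_ofReal (integrableOn_xexp_Ioi hB ht0)
            ((ae_restrict_iff' measurableSet_Ioi).2 (Filter.Eventually.of_forall
              fun t (ht : t0 < t) => mul_nonneg (le_trans ht0 ht.le) (Real.exp_pos _).le))]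
      _ = (d : ℝ≥0∞) * ENNReal.ofReal ((B * t0 + B ^ 2) * Real.exp (-(t0 / B))) := by
          rw [integral_xexp_Ioi hB ht0]
      _ = ENNReal.ofReal (B ^ 2 * (Real.log d + 1)) := by
          have hd0 : (0 : ℝ) < d := by exact_mod_cast hd
          have hexp : Real.exp (-(t0 / B)) = (d : ℝ)⁻¹ := by
            rw [ht0def, mul_comm, mul_div_assoc, div_self hB.ne', mul_one,
              Real.exp_neg, Real.exp_log hd0]
          rw [show ((d : ℕ) : ℝ≥0∞) = ENNReal.ofReal (d : ℝ) by
              simp [ENNReal.ofReal_natCast],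
            ← ENNReal.ofReal_mul (by positivity), hexp]
          congr 1
          rw [ht0def]
          field_simp
  calc ENNReal.ofReal 2 * ∫⁻ t in Set.Ioi 0, μ {a | t < f a} * ENNReal.ofReal t
      = ENNReal.ofReal 2 * ((∫⁻ t in Set.Ioc 0 t0, μ {a | t < f a} * ENNReal.ofReal t)
          + ∫⁻ t in Set.Ioi t0, μ {a | t < f a} * ENNReal.ofReal t) := by
        rw [hsplit, lintegral_union measurableSet_Ioi (Set.Ioc_disjoint_Ioi le_rfl)]
    _ ≤ ENNReal.ofReal 2 * (ENNReal.ofReal (t0 ^ 2 / 2)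
          + ENNReal.ofReal (B ^ 2 * (Real.log d + 1))) :=
        mul_le_mul_right (add_le_add hIoc hIoi) _
    _ = ENNReal.ofReal (2 * (t0 ^ 2 / 2 + B ^ 2 * (Real.log d + 1))) := by
        rw [← ENNReal.ofReal_add (by positivity) (by positivity),
          ← ENNReal.ofReal_mul (by norm_num)]
    _ ≤ ENNReal.ofReal (((Real.log d) ^ 2 / 2 + Real.log d + 1) * (2 * B ^ 2)) :=
        ENNReal.ofReal_le_ofReal (le_of_eq (by rw [ht0def]; ring))
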